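/- arXiv:1504.05835 — 5 statements merged into one kernel-verified Lean document; each statement's English description precedes it below -/
import Mathlib

section
/- Let p ∈ (0,1) and let w, x be real numbers with |x| < w (so that w + x > 0 and w − x > 0). Then ∫₀^∞ z^{1/2} · r_{1/2}( (w+x) z / (2p²) ) · r_{1/2}( (w−x) z / (2(1−p)²) ) dz = (2^{3/2}/√π) · p³ (1−p)³ · ( p² (w−x) + (1−p)² (w+x) )^{−3/2}. -/
open MeasureTheory Set

/-- The density of the one-sided 1/2-stable (Lévy) distribution:
`r_{1/2}(x) = (1/(2√π)) x^{−3/2} exp(−1/(4x))` for `x > 0`, and `0` for `x ≤ 0`. -/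
noncomputable def levyHalf (x : ℝ) : ℝ :=
  if 0 < x then (1 / (2 * Real.sqrt Real.pi)) * x ^ (-(3:ℝ)/2) * Real.exp (-1 / (4 * x)) else 0

lemma sq_rpow_three_halves {p : ℝ} (hp : 0 ≤ p) : ((p^2 : ℝ)) ^ ((3:ℝ)/2) = p ^ 3 := by
  rw [← Real.rpow_natCast p 2, ← Real.rpow_mul hp, ← Real.rpow_natCast p 3]
  norm_num

lemma gamma_three_halves : Real.Gamma ((3:ℝ)/2) = Real.sqrt Real.pi / 2 := by
  have : ((3:ℝ)/2) = 1/2 + 1 := by norm_num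
  rw [this, Real.Gamma_add_one (by norm_num), Real.Gamma_one_half_eq]
  ring

lemma integral_inv_rpow_exp {c : ℝ} (hc : 0 < c) :
    ∫ z in Ioi (0:ℝ), z ^ (-(5:ℝ)/2) * Real.exp (-(c * z⁻¹))
      = (1/c) ^ ((3:ℝ)/2) * Real.Gamma ((3:ℝ)/2) := by
  rw [← Real.integral_rpow_mul_exp_neg_mul_Ioi (by norm_num : (0:ℝ) < 3/2) hc,
    ← integral_comp_rpow_Ioi (fun t => t ^ ((3:ℝ)/2 - 1) * Real.exp (-(c * t)))
      (p := (-1:ℝ)) (by norm_num)]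
  refine setIntegral_congr_fun measurableSet_Ioi fun z hz => ?_
  have hz0 : (0:ℝ) < z := hz
  have h1 : z ^ (-1:ℝ) = z⁻¹ := Real.rpow_neg_one z
  rw [smul_eq_mul, h1, Real.inv_rpow hz0.le, ← Real.rpow_neg hz0.le]
  have : |(-1:ℝ)| * z ^ ((-1:ℝ) - 1) = z ^ (-2:ℝ) := by
    rw [abs_neg, abs_one, one_mul]; norm_num
  rw [this]
  rw [show z ^ (-(5:ℝ)/2) = z ^ (-2:ℝ) * z ^ (-((3:ℝ)/2 - 1)) by
    rw [← Real.rpow_add hz0]; norm_num]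
  ring

/-- For `p ∈ (0,1)` and `|x| < w`,
`∫₀^∞ z^{1/2} r_{1/2}((w+x)z/(2p²)) r_{1/2}((w−x)z/(2(1−p)²)) dz
  = (2^{3/2}/√π) p³ (1−p)³ (p²(w−x) + (1−p)²(w+x))^{−3/2}`. -/
theorem integral_product_levyHalf (p w x : ℝ) (hp : p ∈ Ioo (0:ℝ) 1) (hxw : |x| < w) :
    ∫ z in Ioi (0:ℝ),
        z ^ ((1:ℝ)/2) * levyHalf ((w + x) * z / (2 * p^2)) *
          levyHalf ((w - x) * z / (2 * (1 - p)^2))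
      = (2:ℝ) ^ ((3:ℝ)/2) / Real.sqrt Real.pi * (p^3 * (1 - p)^3) *
          (p^2 * (w - x) + (1 - p)^2 * (w + x)) ^ (-(3:ℝ)/2) := by
  obtain ⟨hp0, hp1⟩ := hp
  obtain ⟨hx1, hx2⟩ := abs_lt.mp hxw
  have hq : (0:ℝ) < 1 - p := by linarith
  have hwx1 : (0:ℝ) < w + x := by linarith
  have hwx2 : (0:ℝ) < w - x := by linarith
  have hπ : (0:ℝ) < Real.sqrt Real.pi := Real.sqrt_pos.mpr Real.pi_pos
  set sπ := Real.sqrt Real.pi with hsπ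
  set a := (w + x) / (2 * p^2) with ha_def
  set b := (w - x) / (2 * (1 - p)^2) with hb_def
  have ha : 0 < a := by positivity
  have hb : 0 < b := by positivity
  set c := 1/(4*a) + 1/(4*b) with hc_def
  have hc : 0 < c := by positivity
  set K := (1/(2*sπ))^2 * a ^ (-((3:ℝ)/2)) * b ^ (-((3:ℝ)/2)) with hK_def
  set S := p^2 * (w - x) + (1 - p)^2 * (w + x) with hS_def
  have hS : 0 < S := by
    have := mul_pos (pow_pos hp0 2) hwx2
    have := mul_pos (pow_pos hq 2) hwx1
    rw [hS_def]; linarith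
  have key : (∫ z in Ioi (0:ℝ),
        z ^ ((1:ℝ)/2) * levyHalf ((w + x) * z / (2 * p^2)) *
          levyHalf ((w - x) * z / (2 * (1 - p)^2)))
      = ∫ z in Ioi (0:ℝ), K * (z ^ (-(5:ℝ)/2) * Real.exp (-(c * z⁻¹))) := by
    refine setIntegral_congr_fun measurableSet_Ioi fun z hz => ?_
    have hz0 : (0:ℝ) < z := hz
    have harg1 : (w + x) * z / (2 * p^2) = a * z := by rw [ha_def]; ring
    have harg2 : (w - x) * z / (2 * (1 - p)^2) = b * z := by rw [hb_def]; ring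
    rw [harg1, harg2, levyHalf, levyHalf, if_pos (by positivity), if_pos (by positivity),
      Real.mul_rpow ha.le hz0.le, Real.mul_rpow hb.le hz0.le]
    have e1 : Real.exp (-1/(4*(a*z))) * Real.exp (-1/(4*(b*z))) = Real.exp (-(c * z⁻¹)) := by
      rw [← Real.exp_add]
      congr 1
      rw [hc_def]
      field_simp
      ring
    have hzp : z ^ ((1:ℝ)/2) * (z ^ (-(3:ℝ)/2) * z ^ (-(3:ℝ)/2)) = z ^ (-(5:ℝ)/2) := by
      rw [← Real.rpow_add hz0, ← Real.rpow_add hz0]; norm_num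
    calc z ^ ((1:ℝ)/2) * (1/(2*sπ) * (a ^ (-(3:ℝ)/2) * z ^ (-(3:ℝ)/2)) * Real.exp (-1/(4*(a*z))))
          * (1/(2*sπ) * (b ^ (-(3:ℝ)/2) * z ^ (-(3:ℝ)/2)) * Real.exp (-1/(4*(b*z))))
        = ((1/(2*sπ))^2 * a ^ (-(3:ℝ)/2) * b ^ (-(3:ℝ)/2)) *
            ((z ^ ((1:ℝ)/2) * (z ^ (-(3:ℝ)/2) * z ^ (-(3:ℝ)/2))) *
              (Real.exp (-1/(4*(a*z))) * Real.exp (-1/(4*(b*z))))) := by ring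
      _ = K * (z ^ (-(5:ℝ)/2) * Real.exp (-(c * z⁻¹))) := by
          rw [hzp, e1, hK_def, neg_div]
  rw [key, integral_const_mul, integral_inv_rpow_exp hc, gamma_three_halves, ← hsπ]
  have h1c : 1/c = 4*a*b/(a+b) := by
    rw [hc_def]; field_simp; ring
  have h4 : ((4:ℝ)) ^ ((3:ℝ)/2) = 8 := by
    rw [show (4:ℝ) = 2^2 by norm_num, sq_rpow_three_halves (by norm_num : (0:ℝ) ≤ 2)]
    norm_num
  have h2 : (1/c) ^ ((3:ℝ)/2)
      = 8 * a ^ ((3:ℝ)/2) * b ^ ((3:ℝ)/2) * ((a+b) ^ ((3:ℝ)/2))⁻¹ := by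
    rw [h1c, Real.div_rpow (by positivity) (by positivity),
      Real.mul_rpow (by positivity) hb.le, Real.mul_rpow (by positivity) ha.le, h4,
      div_eq_mul_inv]
  have hab_eq : a + b = S / (2 * p^2 * (1-p)^2) := by
    rw [ha_def, hb_def, hS_def]; field_simp; ring
  have h3 : (a+b) ^ ((3:ℝ)/2) = S ^ ((3:ℝ)/2) * (2 ^ ((3:ℝ)/2) * p^3 * (1-p)^3)⁻¹ := by
    rw [hab_eq, Real.div_rpow hS.le (by positivity),
      Real.mul_rpow (by positivity) (by positivity : (0:ℝ) ≤ (1-p)^2),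
      Real.mul_rpow (by positivity) (by positivity : (0:ℝ) ≤ p^2),
      sq_rpow_three_halves hp0.le, sq_rpow_three_halves hq.le]
    rw [div_eq_mul_inv]
  clear_value a b c S K
  rw [h2, h3]
  rw [hK_def]
  rw [show (-((3:ℝ))/2) = -((3:ℝ)/2) by norm_num,
    Real.rpow_neg ha.le, Real.rpow_neg hb.le, Real.rpow_neg hS.le]
  have hA : a ^ ((3:ℝ)/2) ≠ 0 := by positivity
  have hB : b ^ ((3:ℝ)/2) ≠ 0 := by positivity
  have hSS : S ^ ((3:ℝ)/2) ≠ 0 := by positivity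
  have h2p : ((2:ℝ)) ^ ((3:ℝ)/2) ≠ 0 := by positivity
  field_simp
  ring
end

section
/- Let p ∈ (0,1), t > 0 and x real with 0 < |x| < t. Then (1/(4√π p² (1−p)²)) ∫_{|x|}^{t} (t − w)^{−1/2} [ ∫₀^∞ z^{1/2} r_{1/2}( (w+x) z / (2p²) ) r_{1/2}( (w−x) z / (2(1−p)²) ) dz ] dw = (√2/π) p (1−p) (t − |x|)^{1/2} / [ ( 2p² t + (1−2p)(t+x) ) · ( 2p² |x| + (1−2p)(x+|x|) )^{1/2} ]. The left-hand side is the formula of Theorem 1 for the density p_t(x) of the wait-first Lévy walk limit X(t) = L_α⁻(S_α^{−1}(t)) specialized to α = 1/2, and the right-hand side is the closed form of Corollary 2. -/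
open MeasureTheory Set

lemma L1 {c : ℝ} (hc : 0 < c) :
    ∫ z in Ioi (0:ℝ), z ^ (-(5:ℝ)/2) * Real.exp (-c / z)
      = Real.sqrt Real.pi / 2 * c ^ (-(3:ℝ)/2) := by
  have key := MeasureTheory.integral_comp_rpow_Ioi
    (fun y => y ^ ((1:ℝ)/2) * Real.exp (-(c * y))) (p := (-1:ℝ)) (by norm_num)
  simp only [smul_eq_mul] at key
  have h1 : (∫ x in Ioi (0:ℝ), (|(-1:ℝ)| * x ^ ((-1:ℝ) - 1)) *
      ((x ^ (-1:ℝ)) ^ ((1:ℝ)/2) * Real.exp (-(c * x ^ (-1:ℝ)))))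
      = ∫ z in Ioi (0:ℝ), z ^ (-(5:ℝ)/2) * Real.exp (-c / z) := by
    refine setIntegral_congr_fun measurableSet_Ioi (fun z hz => ?_)
    have hz0 : (0:ℝ) < z := hz
    have e1 : (z ^ (-1:ℝ)) ^ ((1:ℝ)/2) = z ^ (-(1:ℝ)/2) := by
      rw [← Real.rpow_mul hz0.le]; norm_num
    have e2 : z ^ (-1:ℝ) = z⁻¹ := Real.rpow_neg_one z
    have e3 : z ^ ((-1:ℝ)-1) * z ^ (-(1:ℝ)/2) = z ^ (-(5:ℝ)/2) := by
      rw [← Real.rpow_add hz0]; norm_num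
    rw [e1, e2, abs_neg, abs_one, one_mul,
      show -(c*z⁻¹) = -c/z by field_simp, ← e3]
    ring
  have h2 : (∫ y in Ioi (0:ℝ), y ^ ((1:ℝ)/2) * Real.exp (-(c * y)))
      = Real.sqrt Real.pi / 2 * c ^ (-(3:ℝ)/2) := by
    have h := Real.integral_rpow_mul_exp_neg_mul_Ioi (a := (3:ℝ)/2) (r := c) (by norm_num) hc
    norm_num at h
    have hg : Real.Gamma ((3:ℝ)/2) = Real.sqrt Real.pi / 2 := by
      rw [show (3:ℝ)/2 = 1/2 + 1 by norm_num,
        Real.Gamma_add_one (by norm_num : (1:ℝ)/2 ≠ 0), Real.Gamma_one_half_eq]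
      ring
    have hcinv : c⁻¹ ^ ((3:ℝ)/2) = c ^ (-(3:ℝ)/2) := by
      rw [← Real.rpow_neg_one c, ← Real.rpow_mul hc.le]; norm_num
    rw [h, hcinv, hg]
    ring
  rw [← h1]
  rw [key]
  exact h2

lemma h8 : ((1:ℝ)/4) ^ (-(3:ℝ)/2) = 8 := by
  rw [show ((1:ℝ)/4) = ((1:ℝ)/2)^(2:ℕ) by norm_num,
    ← Real.rpow_natCast ((1:ℝ)/2) 2, ← Real.rpow_mul (by norm_num)]
  rw [show ((2:ℕ):ℝ) * (-(3:ℝ)/2) = -3 by norm_num]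
  rw [show (-3:ℝ) = -(3:ℝ) from rfl, Real.rpow_neg (by norm_num),
    show (3:ℝ) = ((3:ℕ):ℝ) by norm_num, Real.rpow_natCast]
  norm_num

lemma L2 {a b : ℝ} (ha : 0 < a) (hb : 0 < b) :
    ∫ z in Ioi (0:ℝ), z ^ ((1:ℝ)/2) * levyHalf (a*z) * levyHalf (b*z)
      = (1 / Real.sqrt Real.pi) * (a+b) ^ (-(3:ℝ)/2) := by
  set c : ℝ := (a+b)/(4*a*b) with hcdef
  have hab : 0 < a + b := by linarith
  have hc : 0 < c := by positivity
  set K : ℝ := (1/(2*Real.sqrt Real.pi))^2 * (a^(-(3:ℝ)/2) * b^(-(3:ℝ)/2)) with hK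
  have step : ∫ z in Ioi (0:ℝ), z ^ ((1:ℝ)/2) * levyHalf (a*z) * levyHalf (b*z)
      = ∫ z in Ioi (0:ℝ), K * (z ^ (-(5:ℝ)/2) * Real.exp (-c / z)) := by
    refine setIntegral_congr_fun measurableSet_Ioi (fun z hz => ?_)
    have hz0 : (0:ℝ) < z := hz
    have haz : 0 < a*z := by positivity
    have hbz : 0 < b*z := by positivity
    have h5 : z^((1:ℝ)/2) * (z^(-(3:ℝ)/2) * z^(-(3:ℝ)/2)) = z^(-(5:ℝ)/2) := by
      rw [← Real.rpow_add hz0, ← Real.rpow_add hz0]; norm_num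
    have hexp : Real.exp (-1/(4*(a*z))) * Real.exp (-1/(4*(b*z))) = Real.exp (-c/z) := by
      rw [← Real.exp_add]; congr 1; rw [hcdef]; field_simp [ha.ne', hb.ne', hz0.ne']; ring
    simp only [levyHalf, if_pos haz, if_pos hbz]
    rw [Real.mul_rpow ha.le hz0.le, Real.mul_rpow hb.le hz0.le, hK, ← h5, ← hexp]
    ring
  rw [step, MeasureTheory.integral_const_mul, L1 hc]
  have habc : a^(-(3:ℝ)/2) * b^(-(3:ℝ)/2) * c^(-(3:ℝ)/2) = 8 * (a+b)^(-(3:ℝ)/2) := by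
    rw [← Real.mul_rpow ha.le hb.le, ← Real.mul_rpow (by positivity) hc.le]
    rw [show a*b*c = (a+b) * (1/4) by rw [hcdef]; field_simp]
    rw [Real.mul_rpow hab.le (by norm_num), h8]
    ring
  have hs : (0:ℝ) < Real.sqrt Real.pi := Real.sqrt_pos.mpr Real.pi_pos
  have hpi : Real.sqrt Real.pi * Real.sqrt Real.pi = Real.pi :=
    Real.mul_self_sqrt Real.pi_pos.le
  rw [hK]
  field_simp
  nlinarith [habc, hs, hpi, Real.rpow_pos_of_pos hab (-(3:ℝ)/2)]

lemma L3 {A B s t : ℝ} (hA : 0 < A) (hsB : 0 < A*s+B) (hst : s < t) :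
    ∫ w in s..t, (t-w)^(-(1:ℝ)/2) * (A*w+B)^(-(3:ℝ)/2)
      = 2 * Real.sqrt (t-s) / ((A*t+B) * Real.sqrt (A*s+B)) := by
  have htB : 0 < A*t+B := by nlinarith
  set F : ℝ → ℝ := fun w => -2/(A*t+B) * (Real.sqrt (t-w) / Real.sqrt (A*w+B)) with hF
  have hcont : ContinuousOn F (Icc s t) := by
    apply ContinuousOn.mul continuousOn_const
    apply ContinuousOn.div
    · exact (Real.continuous_sqrt.comp (continuous_const.sub continuous_id)).continuousOn
    · exact (Real.continuous_sqrt.comp ((continuous_const.mul continuous_id).add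
        continuous_const)).continuousOn
    · intro w hw
      have : 0 < A*w+B := by nlinarith [hw.1]
      positivity
  have hderiv : ∀ w ∈ Ioo s t,
      HasDerivAt F ((t-w)^(-(1:ℝ)/2) * (A*w+B)^(-(3:ℝ)/2)) w := by
    intro w hw
    have hu0 : 0 < t - w := by linarith [hw.2]
    have hv0 : 0 < A*w+B := by nlinarith [hw.1]
    have hu : HasDerivAt (fun w => Real.sqrt (t-w)) (1/(2*Real.sqrt (t-w)) * (-1)) w := by
      exact (Real.hasDerivAt_sqrt hu0.ne').comp w ((hasDerivAt_id w).const_sub t)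
    have hv : HasDerivAt (fun w => Real.sqrt (A*w+B)) (1/(2*Real.sqrt (A*w+B)) * A) w := by
      have : HasDerivAt (fun w : ℝ => A*w+B) A w := by
        simpa using ((hasDerivAt_id w).const_mul A).add_const B
      exact (Real.hasDerivAt_sqrt hv0.ne').comp w this
    have hvne : Real.sqrt (A*w+B) ≠ 0 := by positivity
    have hdiv := (hu.div hv hvne).const_mul (-2/(A*t+B))
    refine hdiv.congr_deriv ?_
    set u := Real.sqrt (t-w) with hu'
    set v := Real.sqrt (A*w+B) with hv'
    have hup : 0 < u := Real.sqrt_pos.mpr hu0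
    have hvp : 0 < v := Real.sqrt_pos.mpr hv0
    have hu2 : u*u = t - w := Real.mul_self_sqrt hu0.le
    have hv2 : v*v = A*w+B := Real.mul_self_sqrt hv0.le
    have e1 : (t-w)^(-(1:ℝ)/2) = u⁻¹ := by
      rw [show (-(1:ℝ)/2) = -(1/2) by norm_num, Real.rpow_neg hu0.le,
        ← Real.sqrt_eq_rpow]
    have e2 : (A*w+B)^(-(3:ℝ)/2) = v⁻¹ * (A*w+B)⁻¹ := by
      rw [show (-(3:ℝ)/2) = -(1/2) + (-1) by norm_num, Real.rpow_add hv0,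
        Real.rpow_neg hv0.le, ← Real.sqrt_eq_rpow, Real.rpow_neg_one]
    have hT : A*t+B = A*(u*u) + v*v := by rw [hu2, hv2]; ring
    rw [e1, e2, ← hv2, hT]
    have h1 : A*(u*u) + v*v > 0 := by positivity
    field_simp
    ring
  have hint : IntervalIntegrable (fun w => (t-w)^(-(1:ℝ)/2) * (A*w+B)^(-(3:ℝ)/2))
      volume s t := by
    have i1 : IntervalIntegrable (fun y : ℝ => y ^ (-(1:ℝ)/2)) volume 0 (t-s) :=
      intervalIntegral.intervalIntegrable_rpow' (by norm_num)
    have i2 : IntervalIntegrable (fun x => (t-x)^(-(1:ℝ)/2)) volume s t := by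
      simpa using (i1.comp_sub_left t).symm
    apply i2.mul_continuousOn
    apply ContinuousOn.rpow_const
    · exact ((continuous_const.mul continuous_id).add continuous_const).continuousOn
    · intro w hw
      rw [uIcc_of_le hst.le] at hw
      have : 0 < A*w+B := by nlinarith [hw.1]
      exact Or.inl this.ne'
  have := intervalIntegral.integral_eq_sub_of_hasDeriv_right_of_le hst.le hcont
    (fun w hw => (hderiv w hw).hasDerivWithinAt) hint
  rw [this, hF]
  simp only [sub_self, Real.sqrt_zero]
  have hvs : Real.sqrt (A*s+B) ≠ 0 := by positivity
  field_simp
  ring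

/-- The formula of Theorem 1 for the density `p_t(x)` of the wait-first Lévy walk limit,
specialized to `α = 1/2`, equals the closed form of Corollary 2: for `p ∈ (0,1)`, `t > 0`
and `0 < |x| < t`,
`(1/(4√π p²(1−p)²)) ∫_{|x|}^{t} (t−w)^{−1/2}
    [∫₀^∞ z^{1/2} r_{1/2}((w+x)z/(2p²)) r_{1/2}((w−x)z/(2(1−p)²)) dz] dw
 = (√2/π) p(1−p) (t−|x|)^{1/2} / ((2p²t + (1−2p)(t+x)) (2p²|x| + (1−2p)(x+|x|))^{1/2})`. -/
theorem wait_first_density_half (p t x : ℝ) (hp : p ∈ Ioo (0:ℝ) 1) (ht : 0 < t)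
    (hx₀ : 0 < |x|) (hxt : |x| < t) :
    (1 / (4 * Real.sqrt Real.pi * p^2 * (1 - p)^2)) *
      ∫ w in |x|..t, (t - w) ^ (-(1:ℝ)/2) *
        ∫ z in Ioi (0:ℝ),
          z ^ ((1:ℝ)/2) * levyHalf ((w + x) * z / (2 * p^2)) *
            levyHalf ((w - x) * z / (2 * (1 - p)^2))
      = Real.sqrt 2 / Real.pi * (p * (1 - p)) * (t - |x|) ^ ((1:ℝ)/2) /
          ((2 * p^2 * t + (1 - 2*p) * (t + x)) *
            (2 * p^2 * |x| + (1 - 2*p) * (x + |x|)) ^ ((1:ℝ)/2)) := by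
  obtain ⟨hp0, hp1⟩ := hp
  have hq0 : (0:ℝ) < 1 - p := by linarith
  set A : ℝ := p^2 + (1-p)^2 with hAdef
  set B : ℝ := (1-2*p)*x with hBdef
  have hA : 0 < A := by positivity
  have hsB : 0 < A*|x|+B := by
    rcases abs_cases x with ⟨h1, h2⟩ | ⟨h1, h2⟩
    · have hxpos : 0 < x := h1 ▸ hx₀
      rw [h1, hAdef, hBdef]
      nlinarith [mul_pos (pow_pos hq0 2) hxpos]
    · rw [h1, hAdef, hBdef]
      nlinarith [mul_pos (pow_pos hp0 2) (neg_pos.mpr h2)]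
  have hC : ((2*p^2*(1-p)^2 : ℝ))^((3:ℝ)/2) = 2*Real.sqrt 2*p^3*(1-p)^3 := by
    have hy : (0:ℝ) < 2*p^2*(1-p)^2 := by positivity
    rw [show ((3:ℝ)/2) = 1 + 1/2 by norm_num, Real.rpow_add hy, Real.rpow_one,
      ← Real.sqrt_eq_rpow, show (2*p^2*(1-p)^2 : ℝ) = 2 * (p^2 * (1-p)^2) by ring,
      Real.sqrt_mul (by norm_num), show (p^2*(1-p)^2 : ℝ) = (p*(1-p))^2 by ring,
      Real.sqrt_sq (by positivity)]
    ring
  have hcongr : (∫ w in |x|..t, (t - w) ^ (-(1:ℝ)/2) *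
        ∫ z in Ioi (0:ℝ),
          z ^ ((1:ℝ)/2) * levyHalf ((w + x) * z / (2 * p^2)) *
            levyHalf ((w - x) * z / (2 * (1 - p)^2)))
      = ∫ w in |x|..t, (1/Real.sqrt Real.pi * (2*Real.sqrt 2*p^3*(1-p)^3)) *
          ((t - w)^(-(1:ℝ)/2) * (A*w+B)^(-(3:ℝ)/2)) := by
    rw [intervalIntegral.integral_of_le hxt.le, intervalIntegral.integral_of_le hxt.le]
    refine setIntegral_congr_fun measurableSet_Ioc (fun w hw => ?_)
    obtain ⟨hw1, hw2⟩ := hw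
    have hwx1 : 0 < w + x := by linarith [neg_abs_le x]
    have hwx2 : 0 < w - x := by linarith [le_abs_self x]
    set a : ℝ := (w+x)/(2*p^2) with hadef
    set b : ℝ := (w-x)/(2*(1-p)^2) with hbdef
    have hapos : 0 < a := by positivity
    have hbpos : 0 < b := by positivity
    have e1 : ∀ z : ℝ, (w + x) * z / (2 * p^2) = a*z := fun z => by rw [hadef]; ring
    have e2 : ∀ z : ℝ, (w - x) * z / (2 * (1-p)^2) = b*z := fun z => by rw [hbdef]; ring
    have hAwB : 0 < A*w+B := by nlinarith [hsB]
    have hsum : a + b = (A*w+B) * (2*p^2*(1-p)^2)⁻¹ := by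
      rw [hadef, hbdef, hAdef, hBdef]
      field_simp
      ring
    have hinv : ((2*p^2*(1-p)^2 : ℝ)⁻¹)^(-(3:ℝ)/2) = (2*p^2*(1-p)^2 : ℝ)^((3:ℝ)/2) := by
      rw [← Real.rpow_neg_one, ← Real.rpow_mul (by positivity : (0:ℝ) ≤ 2*p^2*(1-p)^2)]
      norm_num
    simp only [e1, e2]
    rw [L2 hapos hbpos, hsum,
      Real.mul_rpow hAwB.le (by positivity), hinv, hC]
    ring
  have hL3 := L3 hA hsB hxt
  rw [hcongr, intervalIntegral.integral_const_mul, hL3,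
    show 2 * p^2 * t + (1 - 2*p) * (t + x) = A*t+B by rw [hAdef, hBdef]; ring,
    show 2 * p^2 * |x| + (1 - 2*p) * (x + |x|) = A*|x|+B by rw [hAdef, hBdef]; ring,
    ← Real.sqrt_eq_rpow, ← Real.sqrt_eq_rpow]
  have htB : 0 < A*t+B := by nlinarith
  have hs2 : (0:ℝ) < Real.sqrt (A*|x|+B) := Real.sqrt_pos.mpr hsB
  have hspi : (0:ℝ) < Real.sqrt Real.pi := Real.sqrt_pos.mpr Real.pi_pos
  have hpi : Real.sqrt Real.pi * Real.sqrt Real.pi = Real.pi :=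
    Real.mul_self_sqrt Real.pi_pos.le
  have hpipos := Real.pi_pos
  set sp := Real.sqrt Real.pi with hsp
  rw [← hpi]
  have hp0' := hp0.ne'
  have hq0' := hq0.ne'
  field_simp
  ring
end

section
/- Let t > 0 and y ≥ t. Then (1/(4π)) ∫_{−t}^{t} ( |x|^{−1/2} − t^{−1/2} ) (y − x)^{−3/2} dx = (1/π) · t^{1/2} / [ y ( (y−t)^{1/2} + (y+t)^{1/2} ) ]. -/
open MeasureTheory Set

/-- The symmetric (`p = 1/2`) jump-first Lévy walk density at points `y ≥ t`:
`(1/(4π)) ∫_{−t}^{t} (|x|^{−1/2} − t^{−1/2}) (y−x)^{−3/2} dx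
 = (1/π) t^{1/2} / (y ((y−t)^{1/2} + (y+t)^{1/2}))`. -/
theorem jump_first_density_symmetric_tail (t y : ℝ) (ht : 0 < t) (hy : t ≤ y) :
    (1 / (4 * Real.pi)) *
        ∫ x in (-t)..t, (|x| ^ (-(1:ℝ)/2) - t ^ (-(1:ℝ)/2)) * (y - x) ^ (-(3:ℝ)/2)
      = (1 / Real.pi) * t ^ ((1:ℝ)/2) /
          (y * ((y - t) ^ ((1:ℝ)/2) + (y + t) ^ ((1:ℝ)/2))) := by
  have hy0 : 0 < y := lt_of_lt_of_le ht hy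
  have hst : 0 < Real.sqrt t := Real.sqrt_pos.2 ht
  have hsy : 0 < Real.sqrt y := Real.sqrt_pos.2 hy0
  have hbb : 0 < Real.sqrt (y + t) := Real.sqrt_pos.2 (by linarith)
  have haa : 0 ≤ Real.sqrt (y - t) := Real.sqrt_nonneg _
  have hpi : 0 < Real.pi := Real.pi_pos
  -- abbreviation for the integrand in sqrt form
  set g : ℝ → ℝ :=
    fun x => ((Real.sqrt |x|)⁻¹ - (Real.sqrt t)⁻¹) * ((Real.sqrt (y - x))^3)⁻¹ with hg
  -- rewrite the integrand
  have hneg2 : ∀ a : ℝ, 0 ≤ a → a ^ (-(1:ℝ)/2) = (Real.sqrt a)⁻¹ := by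
    intro a ha
    rw [show (-(1:ℝ)/2) = -(1/2 : ℝ) by norm_num, Real.rpow_neg ha, Real.sqrt_eq_rpow]
  have hneg32 : ∀ a : ℝ, 0 ≤ a → a ^ (-(3:ℝ)/2) = ((Real.sqrt a)^3)⁻¹ := by
    intro a ha
    rw [show (-(3:ℝ)/2) = -((3:ℝ)/2) by norm_num, Real.rpow_neg ha]
    congr 1
    rw [show ((3:ℝ)/2) = (1/2 : ℝ) * (3:ℕ) by push_cast; ring, Real.rpow_mul ha,
      Real.rpow_natCast, Real.sqrt_eq_rpow]
  have hstep1 : (∫ x in (-t)..t, (|x| ^ (-(1:ℝ)/2) - t ^ (-(1:ℝ)/2)) * (y - x) ^ (-(3:ℝ)/2))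
      = ∫ x in (-t)..t, g x := by
    apply intervalIntegral.integral_congr
    intro x hx
    rw [uIcc_of_le (by linarith : -t ≤ t)] at hx
    have h1 : (0:ℝ) ≤ y - x := by linarith [hx.2]
    simp only [hg]
    rw [hneg2 _ (abs_nonneg x), hneg2 _ ht.le, hneg32 _ h1]
  -- the antiderivative on [-t, 0]
  set G : ℝ → ℝ := fun u =>
    (-(2/y)) * (Real.sqrt (-u) * (Real.sqrt (y - u))⁻¹)
      + (-(2/Real.sqrt t)) * (Real.sqrt (y - u))⁻¹ with hG
  -- the antiderivative on [0, t]
  set F : ℝ → ℝ := fun u =>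
    -2 * Real.sqrt (y - u) / (y * Real.sqrt t)
      + 2 * Real.sqrt u * (t - u) /
        (y * Real.sqrt t * Real.sqrt (y - u) * (Real.sqrt u + Real.sqrt t)) with hF
  -- derivative of G
  have hderivG : ∀ x ∈ Ioo (-t) (0:ℝ), HasDerivAt G (g x) x := by
    intro x hx
    have hmx : 0 < -x := by linarith [hx.2]
    have hyx : 0 < y - x := by linarith [hx.2]
    have hsm : 0 < Real.sqrt (-x) := Real.sqrt_pos.2 hmx
    have hs : 0 < Real.sqrt (y - x) := Real.sqrt_pos.2 hyx
    have d2 : HasDerivAt (fun u : ℝ => y - u) (-1) x := by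
      simpa using (hasDerivAt_id x).const_sub y
    have d3 : HasDerivAt (fun u : ℝ => Real.sqrt (y - u)) (-1 / (2 * Real.sqrt (y - x))) x :=
      d2.sqrt hyx.ne'
    have d4 : HasDerivAt (fun u : ℝ => (Real.sqrt (y - u))⁻¹)
        (-(-1 / (2 * Real.sqrt (y - x))) / (Real.sqrt (y - x))^2) x := d3.inv hs.ne'
    have dneg : HasDerivAt (fun u : ℝ => -u) (-1 : ℝ) x := hasDerivAt_neg' x
    have d1 : HasDerivAt (fun u : ℝ => Real.sqrt (-u)) (-1 / (2 * Real.sqrt (-x))) x :=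
      dneg.sqrt hmx.ne'
    have d5 := d1.mul d4
    have d6 := (d5.const_mul (-(2/y))).add (d4.const_mul (-(2/Real.sqrt t)))
    refine HasDerivAt.congr_deriv (f := G) d6 ?_
    symm
    have hax : |x| = -x := abs_of_neg hx.2
    simp only [hg, hax]
    set sm := Real.sqrt (-x) with hsm'
    set s := Real.sqrt (y - x) with hs'
    have e2 : y = s^2 - sm^2 := by
      rw [Real.sq_sqrt hyx.le, Real.sq_sqrt hmx.le]; ring
    have hne : s^2 - sm^2 ≠ 0 := by rw [← e2]; exact hy0.ne'
    rw [e2]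
    field_simp
    ring
  -- derivative of F
  have hderivF : ∀ x ∈ Ioo (0:ℝ) t, HasDerivAt F (g x) x := by
    intro x hx
    have hx0 : 0 < x := hx.1
    have hyx : 0 < y - x := by linarith [hx.2]
    have hsx : 0 < Real.sqrt x := Real.sqrt_pos.2 hx0
    have hs : 0 < Real.sqrt (y - x) := Real.sqrt_pos.2 hyx
    have d2 : HasDerivAt (fun u : ℝ => y - u) (-1) x := by
      simpa using (hasDerivAt_id x).const_sub y
    have d3 : HasDerivAt (fun u : ℝ => Real.sqrt (y - u)) (-1 / (2 * Real.sqrt (y - x))) x :=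
      d2.sqrt hyx.ne'
    have d4 : HasDerivAt (fun u : ℝ => (Real.sqrt (y - u))⁻¹)
        (-(-1 / (2 * Real.sqrt (y - x))) / (Real.sqrt (y - x))^2) x := d3.inv hs.ne'
    have d1 : HasDerivAt (fun u : ℝ => Real.sqrt u) (1 / (2 * Real.sqrt x)) x :=
      Real.hasDerivAt_sqrt hx0.ne'
    have d5 := d1.mul d4
    have d6 := (d5.const_mul (2/y)).add (d4.const_mul (-(2/Real.sqrt t)))
    have hVal : (2/y) * (1 / (2 * Real.sqrt x) * (Real.sqrt (y - x))⁻¹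
          + Real.sqrt x * (-(-1 / (2 * Real.sqrt (y - x))) / (Real.sqrt (y - x))^2))
        + (-(2/Real.sqrt t)) * (-(-1 / (2 * Real.sqrt (y - x))) / (Real.sqrt (y - x))^2)
        = g x := by
      simp only [hg, abs_of_pos hx0]
      set sx := Real.sqrt x with hsx'
      set s := Real.sqrt (y - x) with hs'
      have e2 : y = s^2 + sx^2 := by rw [Real.sq_sqrt hyx.le, Real.sq_sqrt hx0.le]; ring
      have hne : s^2 + sx^2 ≠ 0 := by rw [← e2]; exact hy0.ne'
      rw [e2]
      field_simp
      ring
    rw [← hVal]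
    apply d6.congr_of_eventuallyEq
    filter_upwards [isOpen_Ioo.mem_nhds hx] with u hu
    have hu0 : 0 < u := hu.1
    have hyu : 0 < y - u := by linarith [hu.2]
    have hsu : 0 < Real.sqrt u := Real.sqrt_pos.2 hu0
    have hsyu : 0 < Real.sqrt (y - u) := Real.sqrt_pos.2 hyu
    simp only [hF, Pi.add_apply, Pi.mul_apply]
    set st := Real.sqrt t with hst'
    set su := Real.sqrt u with hsu'
    set s := Real.sqrt (y - u) with hs'
    have et : st^2 = t := Real.sq_sqrt ht.le
    have eu : su^2 = u := Real.sq_sqrt hu0.le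
    have e2 : y = s^2 + su^2 := by rw [Real.sq_sqrt hyu.le, eu]; ring
    have hne : s^2 + su^2 ≠ 0 := by rw [← e2]; exact hy0.ne'
    rw [← et, ← eu, e2]
    have hsum : su + st ≠ 0 := by positivity
    field_simp
    ring
  -- continuity of G on [-t, 0]
  have hcontG : ContinuousOn G (Icc (-t) 0) := by
    have c0 : Continuous fun x : ℝ => Real.sqrt (y - x) :=
      Real.continuous_sqrt.comp (continuous_const.sub continuous_id)
    have cinv : ContinuousOn (fun x : ℝ => (Real.sqrt (y - x))⁻¹) (Icc (-t) 0) := by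
      apply c0.continuousOn.inv₀
      intro x hx
      have : 0 < y - x := by have := hx.2; linarith
      exact (Real.sqrt_pos.2 this).ne'
    exact (continuousOn_const.mul
      (((Real.continuous_sqrt.comp continuous_neg).continuousOn).mul cinv)).add
      (continuousOn_const.mul cinv)
  -- continuity of F on [0, t]
  have hcontF : ContinuousOn F (Icc 0 t) := by
    have c0 : Continuous fun x : ℝ => Real.sqrt (y - x) :=
      Real.continuous_sqrt.comp (continuous_const.sub continuous_id)
    have cnum1 : ContinuousOn (fun x : ℝ => -2 * Real.sqrt (y - x)) (Icc 0 t) :=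
      (continuous_const.mul c0).continuousOn
    have csum : ∀ x ∈ Icc (0:ℝ) t, Real.sqrt x + Real.sqrt t ≠ 0 := by
      intro x hx
      have : 0 ≤ Real.sqrt x := Real.sqrt_nonneg x
      positivity
    rcases hy.eq_or_lt with h | h
    · -- y = t
      subst h
      have cH : ContinuousOn (fun x : ℝ => -2 * Real.sqrt (t - x) / (t * Real.sqrt t)
          + 2 * Real.sqrt x * Real.sqrt (t - x)
            / (t * Real.sqrt t * (Real.sqrt x + Real.sqrt t))) (Icc 0 t) := by
        apply ContinuousOn.add
        · exact (continuous_const.mul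
            (Real.continuous_sqrt.comp (continuous_const.sub continuous_id))).continuousOn.div
            continuousOn_const (by intro x _; positivity)
        · apply ContinuousOn.div
          · exact ((continuous_const.mul Real.continuous_sqrt).mul
              (Real.continuous_sqrt.comp (continuous_const.sub continuous_id))).continuousOn
          · exact continuousOn_const.mul
              (Real.continuous_sqrt.continuousOn.add continuousOn_const)
          · intro x hx
            have h1 := csum x hx
            have h2 : t * Real.sqrt t ≠ 0 := by positivity
            exact mul_ne_zero h2 h1
      apply cH.congr
      intro x hx
      simp only [hF]
      rcases hx.2.eq_or_lt with hxe | hxl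
      · subst hxe
        simp
      · have htx : 0 < t - x := by linarith
        have hstx : 0 < Real.sqrt (t - x) := Real.sqrt_pos.2 htx
        have etx : Real.sqrt (t - x) ^ 2 = t - x := Real.sq_sqrt htx.le
        have hsx0 : 0 ≤ Real.sqrt x := Real.sqrt_nonneg x
        congr 1
        rw [div_eq_div_iff (by positivity) (by positivity)]
        linear_combination (-(2*Real.sqrt x*t*Real.sqrt t*(Real.sqrt x+Real.sqrt t))) * etx
    · -- t < y
      apply ContinuousOn.add
      · exact cnum1.div continuousOn_const (by intro x _; positivity)
      · apply ContinuousOn.div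
        · exact (((continuous_const.mul Real.continuous_sqrt).mul
            (continuous_const.sub continuous_id))).continuousOn
        · exact ((continuousOn_const.mul c0.continuousOn).mul
            (Real.continuous_sqrt.continuousOn.add continuousOn_const))
        · intro x hx
          have hyx : 0 < y - x := by have := hx.2; linarith
          have h1 := csum x hx
          have h2 : 0 < Real.sqrt (y - x) := Real.sqrt_pos.2 hyx
          have h3 : y * Real.sqrt t * Real.sqrt (y - x) ≠ 0 := by positivity
          exact mul_ne_zero h3 h1
  -- nonnegativity of g
  have hposL : ∀ x ∈ Ioo (-t) (0:ℝ), 0 ≤ g x := by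
    intro x hx
    rw [hg]
    apply mul_nonneg _ (by positivity)
    have h1 : 0 < |x| := abs_pos.2 (by linarith [hx.2] : x ≠ 0)
    have h2 : |x| ≤ t := by rw [abs_of_neg hx.2]; linarith [hx.1]
    have h3 : 0 < Real.sqrt |x| := Real.sqrt_pos.2 h1
    have h4 : Real.sqrt |x| ≤ Real.sqrt t := Real.sqrt_le_sqrt h2
    have := inv_anti₀ h3 h4
    linarith
  have hposR : ∀ x ∈ Ioo (0:ℝ) t, 0 ≤ g x := by
    intro x hx
    rw [hg]
    apply mul_nonneg _ (by positivity)
    have h1 : 0 < |x| := abs_pos.2 hx.1.ne'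
    have h2 : |x| ≤ t := by rw [abs_of_pos hx.1]; linarith [hx.2]
    have h3 : 0 < Real.sqrt |x| := Real.sqrt_pos.2 h1
    have h4 : Real.sqrt |x| ≤ Real.sqrt t := Real.sqrt_le_sqrt h2
    have := inv_anti₀ h3 h4
    linarith
  -- integrability
  have hminL : min (-t) (0:ℝ) = -t := min_eq_left (by linarith)
  have hmaxL : max (-t) (0:ℝ) = 0 := max_eq_right (by linarith)
  have hminR : min (0:ℝ) t = 0 := min_eq_left ht.le
  have hmaxR : max (0:ℝ) t = t := max_eq_right ht.le
  have hintL : IntervalIntegrable g volume (-t) 0 := by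
    apply intervalIntegral.intervalIntegrable_deriv_of_nonneg (g := G)
    · rw [uIcc_of_le (by linarith : -t ≤ (0:ℝ))]; exact hcontG
    · rw [hminL, hmaxL]; exact hderivG
    · rw [hminL, hmaxL]; exact hposL
  have hintR : IntervalIntegrable g volume 0 t := by
    apply intervalIntegral.intervalIntegrable_deriv_of_nonneg (g := F)
    · rw [uIcc_of_le ht.le]; exact hcontF
    · rw [hminR, hmaxR]; exact hderivF
    · rw [hminR, hmaxR]; exact hposR
  -- FTC on both halves
  have hIL : ∫ x in (-t)..(0:ℝ), g x = G 0 - G (-t) :=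
    intervalIntegral.integral_eq_sub_of_hasDerivAt_of_le (by linarith) hcontG hderivG hintL
  have hIR : ∫ x in (0:ℝ)..t, g x = F t - F 0 :=
    intervalIntegral.integral_eq_sub_of_hasDerivAt_of_le ht.le hcontF hderivF hintR
  have hsplit : ∫ x in (-t)..t, g x = (∫ x in (-t)..(0:ℝ), g x) + ∫ x in (0:ℝ)..t, g x :=
    (intervalIntegral.integral_add_adjacent_intervals hintL hintR).symm
  -- endpoint values
  have hG0 : G 0 = (-(2/Real.sqrt t)) * (Real.sqrt y)⁻¹ := by
    rw [hG]; simp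
  have hGmt : G (-t) = (-(2/y)) * (Real.sqrt t * (Real.sqrt (y + t))⁻¹)
      + (-(2/Real.sqrt t)) * (Real.sqrt (y + t))⁻¹ := by
    rw [hG]; simp [sub_neg_eq_add]
  have hFt : F t = -2 * Real.sqrt (y - t) / (y * Real.sqrt t) := by
    rw [hF]; simp
  have hF0 : F 0 = -2 * Real.sqrt y / (y * Real.sqrt t) := by
    rw [hF]; simp
  -- put everything together
  rw [hstep1, hsplit, hIL, hIR, hG0, hGmt, hFt, hF0,
    ← Real.sqrt_eq_rpow t, ← Real.sqrt_eq_rpow (y - t), ← Real.sqrt_eq_rpow (y + t)]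
  set st := Real.sqrt t with hst'
  set sy := Real.sqrt y with hsy'
  set aa := Real.sqrt (y - t) with haa'
  set bb := Real.sqrt (y + t) with hbb'
  have h1 : st^2 = t := Real.sq_sqrt ht.le
  have h2 : sy^2 = y := Real.sq_sqrt hy0.le
  have h3 : aa^2 = y - t := Real.sq_sqrt (by linarith)
  have h4 : bb^2 = y + t := Real.sq_sqrt (by linarith)
  have hA : bb^2 = sy^2 + st^2 := by rw [h1, h2]; exact h4
  have hB : aa^2 = sy^2 - st^2 := by rw [h1, h2]; exact h3
  have hab : 0 < aa + bb := by linarith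
  rw [← h2]
  field_simp
  linear_combination (-2*aa) * hA + (-2*bb) * hB
end

section
/- Let p ∈ (0,1), t > 0. Then ∫_{−t}^{t} (√2/π) p (1−p) (t − |x|)^{1/2} / [ ( 2p² t + (1−2p)(t+x) ) · ( 2p² |x| + (1−2p)(x+|x|) )^{1/2} ] dx = 1. That is, the closed-form expression of Corollary 2 is a probability density on (−t, t). -/
open MeasureTheory Set

lemma hdai (t x : ℝ) (ht : 0 < t) (hx : 0 < x) (hxt : x < t) :
    HasDerivAt (fun y => Real.arcsin (Real.sqrt (y / t)))
      (1 / (2 * Real.sqrt x * Real.sqrt (t - x))) x := by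
  have hxt0 : (0:ℝ) < x / t := div_pos hx ht
  have hlt1 : x / t < 1 := (div_lt_one ht).2 hxt
  have hu : HasDerivAt (fun y : ℝ => Real.sqrt (y / t)) (1 / (2 * Real.sqrt (x / t)) * (1 / t)) x := by
    have h1 : HasDerivAt (fun y : ℝ => y / t) (1 / t) x := (hasDerivAt_id x).div_const t
    exact (Real.hasDerivAt_sqrt (ne_of_gt hxt0)).comp x h1
  have hs1 : Real.sqrt (x / t) ≠ -1 := by
    have := Real.sqrt_nonneg (x / t); intro h; linarith
  have hs2 : Real.sqrt (x / t) < 1 := by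
    rw [show (1:ℝ) = Real.sqrt 1 by simp]
    exact Real.sqrt_lt_sqrt (le_of_lt hxt0) hlt1
  have harc := (Real.hasDerivAt_arcsin hs1 (ne_of_lt hs2)).comp x hu
  refine harc.congr_deriv (Eq.symm ?_)
  have h2 : Real.sqrt (x / t) ^ 2 = x / t := Real.sq_sqrt hxt0.le
  rw [h2]
  have h3 : (1 : ℝ) - x / t = (t - x) / t := by field_simp
  rw [h3, Real.sqrt_div' _ ht.le, Real.sqrt_div' _ ht.le]
  have hst : Real.sqrt t > 0 := Real.sqrt_pos.2 ht
  have hsx : Real.sqrt x > 0 := Real.sqrt_pos.2 hx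
  have hstx : Real.sqrt (t - x) > 0 := Real.sqrt_pos.2 (by linarith)
  have hts : Real.sqrt t ^ 2 = t := Real.sq_sqrt ht.le
  field_simp
  nlinarith [hts, mul_pos hsx hstx]

lemma hdS (t x : ℝ) (hx : 0 < x) (hxt : x < t) :
    HasDerivAt (fun y => Real.sqrt (y * (t - y)))
      ((t - 2*x) / (2 * Real.sqrt x * Real.sqrt (t - x))) x := by
  have hpos : (0:ℝ) < x * (t - x) := mul_pos hx (by linarith)
  have hp : HasDerivAt (fun y : ℝ => y * (t - y)) (t - 2*x) x := by
    have : HasDerivAt (fun y : ℝ => y * (t - y)) (1 * (t - x) + x * (0 - 1)) x :=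
      (hasDerivAt_id x).mul ((hasDerivAt_const x t).sub (hasDerivAt_id x))
    convert this using 1; ring
  have := (Real.hasDerivAt_sqrt (ne_of_gt hpos)).comp x hp
  refine this.congr_deriv (Eq.symm ?_)
  rw [Real.sqrt_mul hx.le]
  ring

lemma key_integrable (a b t : ℝ) (ha : 0 < a) (ht : 0 < t) (hk : 0 < a + b * t) :
    IntervalIntegrable (fun x => Real.sqrt (t - x) / (Real.sqrt x * (a + b * x)))
      volume 0 t := by
  set A : ℝ := min a (a + b * t) with hA
  have hApos : 0 < A := lt_min ha hk
  have hbound : ∀ x ∈ Ioc (0:ℝ) t, A ≤ a + b * x := by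
    intro x hx
    rcases le_or_gt 0 b with hb | hb
    · calc A ≤ a := min_le_left _ _
        _ ≤ a + b * x := by nlinarith [hx.1]
    · calc A ≤ a + b * t := min_le_right _ _
        _ ≤ a + b * x := by nlinarith [hx.2]
  rw [intervalIntegrable_iff_integrableOn_Ioc_of_le ht.le]
  have hmeas : AEStronglyMeasurable (fun x => Real.sqrt (t - x) / (Real.sqrt x * (a + b * x)))
      (volume.restrict (Ioc (0:ℝ) t)) := by
    apply ContinuousOn.aestronglyMeasurable _ measurableSet_Ioc
    apply ContinuousOn.div
    · exact ((Real.continuous_sqrt).comp (continuous_const.sub continuous_id)).continuousOn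
    · exact (Real.continuous_sqrt.mul (continuous_const.add (continuous_const.mul continuous_id))).continuousOn
    · intro x hx
      have h1 : 0 < Real.sqrt x := Real.sqrt_pos.2 hx.1
      have h2 : 0 < a + b * x := lt_of_lt_of_le hApos (hbound x hx)
      positivity
  have hintb : IntegrableOn (fun x : ℝ => (Real.sqrt t / A) * x ^ (-(1:ℝ)/2)) (Ioc 0 t) volume := by
    have := (intervalIntegral.intervalIntegrable_rpow' (a := 0) (b := t) (r := -(1:ℝ)/2)
      (by norm_num)).const_mul (Real.sqrt t / A)
    rwa [intervalIntegrable_iff_integrableOn_Ioc_of_le ht.le] at this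
  apply hintb.integrable.mono hmeas
  rw [ae_restrict_iff' measurableSet_Ioc]
  apply ae_of_all
  intro x hx
  have hx0 : 0 < x := hx.1
  have hsx : 0 < Real.sqrt x := Real.sqrt_pos.2 hx0
  have hax : 0 < a + b * x := lt_of_lt_of_le hApos (hbound x hx)
  have hrp : x ^ (-(1:ℝ)/2) = (Real.sqrt x)⁻¹ := by
    rw [show (-(1:ℝ)/2) = -(1/2) by norm_num, Real.rpow_neg hx0.le, Real.sqrt_eq_rpow]
  have h1 : ‖Real.sqrt (t - x) / (Real.sqrt x * (a + b * x))‖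
      = Real.sqrt (t - x) / (Real.sqrt x * (a + b * x)) := by
    rw [Real.norm_eq_abs, abs_of_nonneg]; positivity
  have h2 : ‖(Real.sqrt t / A) * x ^ (-(1:ℝ)/2)‖ = (Real.sqrt t / A) * (Real.sqrt x)⁻¹ := by
    rw [hrp, Real.norm_eq_abs, abs_of_nonneg]; positivity
  rw [h1, h2]
  rw [div_le_iff₀ (by positivity)]
  have hle : Real.sqrt (t - x) ≤ Real.sqrt t := Real.sqrt_le_sqrt (by linarith [hx0])
  have hAa : A ≤ a + b * x := hbound x hx
  calc Real.sqrt (t - x) ≤ Real.sqrt t := hle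
    _ ≤ Real.sqrt t / A * (Real.sqrt x)⁻¹ * (Real.sqrt x * (a + b * x)) := by
        rw [div_mul_eq_mul_div, div_mul_eq_mul_div, le_div_iff₀ hApos]
        have : Real.sqrt t * (Real.sqrt x)⁻¹ * (Real.sqrt x * (a + b * x)) =
            Real.sqrt t * (a + b * x) * ((Real.sqrt x)⁻¹ * Real.sqrt x) := by ring
        rw [this, inv_mul_cancel₀ (ne_of_gt hsx), mul_one]
        nlinarith [Real.sqrt_nonneg t]

lemma deriv_algebra (a b t x m sx sτ : ℝ) (ha : 0 < a) (hb : b ≠ 0) (hm : 0 < m)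
    (hsx : 0 < sx) (hsτ : 0 < sτ) (hx : x = sx^2) (htx : t = sx^2 + sτ^2)
    (hbt : b * t = a * (m^2 - 1)) :
    2/b * ((m-1) * (1/(2*sx*sτ)) + m * (1/(1 + ((m-1)*(sx*sτ)/(t+(m-1)*x))^2) *
      ((((m-1)*((t-2*x)/(2*sx*sτ))) * (t+(m-1)*x) - ((m-1)*(sx*sτ))*(m-1)) / (t+(m-1)*x)^2)))
    = sτ / (sx*(a+b*x)) := by
  subst hx; subst htx
  have ht0 : sx^2 + sτ^2 > 0 := by positivity
  have hm1 : m^2 - 1 ≠ 0 := by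
    intro h
    rw [h, mul_zero] at hbt
    exact hb (by
      have := mul_eq_zero.1 hbt
      rcases this with h1 | h1
      · exact h1
      · exact absurd h1 (ne_of_gt ht0))
  have hbe : b = a * (m^2 - 1) / (sx^2 + sτ^2) := by
    field_simp
    linarith [hbt]
  rw [hbe]
  have h1 : sx^2 + sτ^2 + (m-1)*sx^2 = m*sx^2 + sτ^2 := by ring
  have h2 : m*sx^2 + sτ^2 > 0 := by positivity
  have h3 : (0:ℝ) < 1 + ((m-1)*(sx*sτ)/((sx^2+sτ^2)+(m-1)*sx^2))^2 := by positivity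
  have h4 : a * (m^2-1) / (sx^2+sτ^2) ≠ 0 := by
    apply div_ne_zero _ (ne_of_gt ht0)
    exact mul_ne_zero (ne_of_gt ha) hm1
  have h5 : a + a * (m^2-1)/(sx^2+sτ^2) * sx^2 ≠ 0 := by
    have : a + a * (m^2-1)/(sx^2+sτ^2) * sx^2 = a * (m^2*sx^2+sτ^2)/(sx^2+sτ^2) := by
      field_simp; ring
    rw [this]
    positivity
  have hax : a + a * (m^2-1)/(sx^2+sτ^2) * sx^2 = a * (m^2*sx^2+sτ^2)/(sx^2+sτ^2) := by
    field_simp; ring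
  rw [hax]
  have h6 : m^2*sx^2+sτ^2 > 0 := by positivity
  rw [h1] at *
  field_simp
  ring

lemma key_lemma (a b t : ℝ) (ha : 0 < a) (ht : 0 < t) (hk : 0 < a + b * t) :
    ∫ x in (0:ℝ)..t, Real.sqrt (t - x) / (Real.sqrt x * (a + b * x)) =
      Real.pi * t / (Real.sqrt a * (Real.sqrt a + Real.sqrt (a + b * t))) := by
  have hint := key_integrable a b t ha ht hk
  by_cases hb : b = 0
  · subst hb
    set F : ℝ → ℝ := fun y => (t * Real.arcsin (Real.sqrt (y / t)) + Real.sqrt (y * (t - y))) / a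
      with hF
    have hcont : ContinuousOn F (Icc 0 t) := by
      apply Continuous.continuousOn
      apply Continuous.div_const
      exact ((continuous_const.mul (Real.continuous_arcsin.comp
        (Real.continuous_sqrt.comp (continuous_id.div_const t)))).add
        (Real.continuous_sqrt.comp (continuous_id.mul (continuous_const.sub continuous_id))))
    have hderiv : ∀ x ∈ Ioo (0:ℝ) t, HasDerivWithinAt F
        (Real.sqrt (t - x) / (Real.sqrt x * (a + 0 * x))) (Ioi x) x := by
      intro x hx
      have hsx : 0 < Real.sqrt x := Real.sqrt_pos.2 hx.1
      have hstx : 0 < Real.sqrt (t - x) := Real.sqrt_pos.2 (by linarith [hx.2])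
      have h1 := ((hdai t x ht hx.1 hx.2).const_mul t).add (hdS t x hx.1 hx.2)
      have h2 := h1.div_const a
      have heq : (t * (1 / (2 * Real.sqrt x * Real.sqrt (t - x))) +
          (t - 2*x) / (2 * Real.sqrt x * Real.sqrt (t - x))) / a
          = Real.sqrt (t - x) / (Real.sqrt x * (a + 0 * x)) := by
        have hs2 : Real.sqrt (t - x) ^ 2 = t - x := Real.sq_sqrt (by linarith [hx.2])
        field_simp
        linear_combination (-2*a*a⁻¹) * hs2 - (2*(t-x)) * mul_inv_cancel₀ (ne_of_gt ha)
      rw [heq] at h2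
      exact h2.hasDerivWithinAt
    have := intervalIntegral.integral_eq_sub_of_hasDeriv_right_of_le ht.le hcont hderiv hint
    rw [this]
    have hF0 : F 0 = 0 := by
      simp [hF, Real.sqrt_zero, Real.arcsin_zero, zero_div, Real.sqrt_eq_zero']
    have hFt : F t = t * (Real.pi / 2) / a := by
      simp only [hF]
      rw [div_self (ne_of_gt ht), Real.sqrt_one, Real.arcsin_one, sub_self, mul_zero,
        Real.sqrt_zero, add_zero]
    rw [hF0, hFt]
    have hsa : Real.sqrt a > 0 := Real.sqrt_pos.2 ha
    have hsa2 : Real.sqrt a ^ 2 = a := Real.sq_sqrt ha.le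
    rw [zero_mul, add_zero]
    field_simp
    linear_combination (2*t*Real.pi) * hsa2
  · -- b ≠ 0
    have hka : 0 < (a + b*t)/a := div_pos hk ha
    set m : ℝ := Real.sqrt ((a + b*t)/a) with hm_def
    have hmpos : 0 < m := Real.sqrt_pos.2 hka
    have hm2 : a * m^2 = a + b*t := by
      rw [hm_def, Real.sq_sqrt hka.le]; field_simp
    have hbt : b * t = a * (m^2 - 1) := by linear_combination -hm2
    set F : ℝ → ℝ := fun y => 2/b * ((m-1) * Real.arcsin (Real.sqrt (y/t)) +
      m * Real.arctan ((m-1) * Real.sqrt (y*(t-y)) / (t+(m-1)*y))) with hF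
    have hDpos : ∀ y ∈ Icc (0:ℝ) t, 0 < t + (m-1)*y := by
      intro y hy
      rcases eq_or_lt_of_le hy.2 with h | h
      · have : t + (m-1)*y = m * t := by rw [← h]; ring
        rw [this]; exact mul_pos hmpos ht
      · nlinarith [mul_nonneg hmpos.le hy.1]
    have hcont : ContinuousOn F (Icc 0 t) := by
      apply ContinuousOn.mul continuousOn_const
      apply ContinuousOn.add
      · exact (continuous_const.mul (Real.continuous_arcsin.comp
          (Real.continuous_sqrt.comp (continuous_id.div_const t)))).continuousOn
      · apply ContinuousOn.mul continuousOn_const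
        apply Real.continuous_arctan.comp_continuousOn
        apply ContinuousOn.div
        · exact (continuous_const.mul (Real.continuous_sqrt.comp
            (continuous_id.mul (continuous_const.sub continuous_id)))).continuousOn
        · exact (continuous_const.add (continuous_const.mul continuous_id)).continuousOn
        · intro y hy; exact ne_of_gt (hDpos y hy)
    have hderiv : ∀ x ∈ Ioo (0:ℝ) t, HasDerivWithinAt F
        (Real.sqrt (t - x) / (Real.sqrt x * (a + b * x))) (Ioi x) x := by
      intro x hx
      have hsx : 0 < Real.sqrt x := Real.sqrt_pos.2 hx.1
      have hstx : 0 < Real.sqrt (t - x) := Real.sqrt_pos.2 (by linarith [hx.2])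
      have hDx : t + (m-1)*x ≠ 0 := ne_of_gt (hDpos x ⟨hx.1.le, hx.2.le⟩)
      have h1 := (hdai t x ht hx.1 hx.2).const_mul (m-1)
      have hNum := (hdS t x hx.1 hx.2).const_mul (m-1)
      have hDen : HasDerivAt (fun y : ℝ => t + (m-1)*y) (m-1) x := by
        exact ((hasDerivAt_const x t).add ((hasDerivAt_id x).const_mul (m-1))).congr_deriv (by ring)
      have hquot := hNum.div hDen hDx
      have harct := (Real.hasDerivAt_arctan ((m-1) * Real.sqrt (x*(t-x)) /
        (t+(m-1)*x))).comp x hquot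
      rw [Real.sqrt_mul hx.1.le] at harct
      have htot := ((h1.add (harct.const_mul m)).const_mul (2/b))
      have hxeq : x = (Real.sqrt x)^2 := (Real.sq_sqrt hx.1.le).symm
      have htxeq : t = (Real.sqrt x)^2 + (Real.sqrt (t-x))^2 := by
        rw [Real.sq_sqrt hx.1.le, Real.sq_sqrt (by linarith [hx.2] : (0:ℝ) ≤ t - x)]; ring
      have halg := deriv_algebra a b t x m (Real.sqrt x) (Real.sqrt (t-x)) ha hb hmpos
        hsx hstx hxeq htxeq hbt
      apply HasDerivAt.hasDerivWithinAt
      refine htot.congr_deriv (Eq.symm ?_)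
      rw [← halg]
    have hres := intervalIntegral.integral_eq_sub_of_hasDeriv_right_of_le ht.le hcont hderiv hint
    rw [hres]
    have hF0 : F 0 = 0 := by
      simp [hF, Real.arcsin_zero, Real.arctan_zero]
    have hFt : F t = 2/b * ((m-1) * (Real.pi/2)) := by
      simp only [hF]
      rw [div_self (ne_of_gt ht), Real.sqrt_one, Real.arcsin_one, sub_self, mul_zero,
        Real.sqrt_zero, mul_zero, zero_div, Real.arctan_zero, mul_zero, add_zero]
    rw [hF0, hFt, sub_zero]
    have hsa : 0 < Real.sqrt a := Real.sqrt_pos.2 ha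
    have hsk : 0 < Real.sqrt (a + b*t) := Real.sqrt_pos.2 hk
    have hsa2 : Real.sqrt a ^ 2 = a := Real.sq_sqrt ha.le
    have hsk2 : Real.sqrt (a + b*t) ^ 2 = a + b*t := Real.sq_sqrt hk.le
    have hmq : m = Real.sqrt (a + b*t) / Real.sqrt a := by
      rw [hm_def, Real.sqrt_div' _ ha.le]
    rw [hmq]
    field_simp
    ring_nf
    linear_combination hsk2 - hsa2

/-- The closed-form expression of Corollary 2 is a probability density on `(−t, t)`:
for `p ∈ (0,1)` and `t > 0`,
`∫_{−t}^{t} (√2/π) p(1−p) (t−|x|)^{1/2}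
    / ((2p²t + (1−2p)(t+x)) (2p²|x| + (1−2p)(x+|x|))^{1/2}) dx = 1`. -/
theorem wait_first_density_integrates_to_one (p t : ℝ) (hp : p ∈ Ioo (0:ℝ) 1) (ht : 0 < t) :
    ∫ x in (-t)..t,
        Real.sqrt 2 / Real.pi * (p * (1 - p)) * (t - |x|) ^ ((1:ℝ)/2) /
          ((2 * p^2 * t + (1 - 2*p) * (t + x)) *
            (2 * p^2 * |x| + (1 - 2*p) * (x + |x|)) ^ ((1:ℝ)/2))
      = 1 := by
  obtain ⟨hp0, hp1⟩ := hp
  have h1p : 0 < 1 - p := by linarith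
  have hc : 0 < 2*p^2 - 2*p + 1 := by nlinarith
  have ha : 0 < (2*p^2 - 2*p + 1)*t := mul_pos hc ht
  have hk1 : 0 < (2*p^2 - 2*p + 1)*t + (1-2*p)*t := by
    rw [show (2*p^2 - 2*p + 1)*t + (1-2*p)*t = 2*(1-p)^2*t by ring]; positivity
  have hk2 : 0 < (2*p^2 - 2*p + 1)*t + (-(1-2*p))*t := by
    rw [show (2*p^2 - 2*p + 1)*t + (-(1-2*p))*t = 2*p^2*t by ring]; positivity
  set f : ℝ → ℝ := fun x => Real.sqrt 2 / Real.pi * (p * (1 - p)) * (t - |x|) ^ ((1:ℝ)/2) /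
      ((2 * p^2 * t + (1 - 2*p) * (t + x)) *
        (2 * p^2 * |x| + (1 - 2*p) * (x + |x|)) ^ ((1:ℝ)/2)) with hf
  have P1 : ∀ x ∈ Icc (0:ℝ) t, f x =
      p/Real.pi * (Real.sqrt (t-x) / (Real.sqrt x * ((2*p^2 - 2*p + 1)*t + (1-2*p)*x))) := by
    intro x hx
    simp only [hf]
    rw [abs_of_nonneg hx.1]
    rcases eq_or_lt_of_le hx.1 with h0 | h0
    · rw [← h0]
      rw [show 2 * p^2 * (0:ℝ) + (1 - 2*p) * (0 + 0) = 0 by ring,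
        Real.zero_rpow (by norm_num : ((1:ℝ)/2) ≠ 0)]
      simp
    · have hx2 : 0 < (2*p^2 - 2*p + 1)*t + (1-2*p)*x := by nlinarith [hx.2]
      have e1 : 2 * p^2 * t + (1 - 2*p) * (t + x) = (2*p^2 - 2*p + 1)*t + (1-2*p)*x := by ring
      have e2 : 2 * p^2 * x + (1 - 2*p) * (x + x) = 2*(1-p)^2*x := by ring
      rw [e1, e2, ← Real.sqrt_eq_rpow, ← Real.sqrt_eq_rpow,
        Real.sqrt_mul (by positivity : (0:ℝ) ≤ 2*(1-p)^2),
        Real.sqrt_mul (by norm_num : (0:ℝ) ≤ 2), Real.sqrt_sq h1p.le]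
      have hsx : 0 < Real.sqrt x := Real.sqrt_pos.2 h0
      have hs2 : 0 < Real.sqrt 2 := by positivity
      have hpi := Real.pi_pos
      rw [show p/Real.pi * (Real.sqrt (t-x)/(Real.sqrt x*((2*p^2 - 2*p + 1)*t + (1-2*p)*x)))
          = (p*Real.sqrt (t-x))/(Real.pi*(Real.sqrt x*((2*p^2 - 2*p + 1)*t + (1-2*p)*x)))
        from by rw [div_mul_div_comm]]
      rw [div_eq_div_iff (by positivity) (by positivity)]
      field_simp
  have P2 : ∀ x ∈ Icc (0:ℝ) t, f (-x) =
      (1-p)/Real.pi * (Real.sqrt (t-x) / (Real.sqrt x * ((2*p^2 - 2*p + 1)*t + (-(1-2*p))*x))) := by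
    intro x hx
    simp only [hf]
    rw [abs_neg, abs_of_nonneg hx.1]
    rcases eq_or_lt_of_le hx.1 with h0 | h0
    · rw [← h0]
      rw [show 2 * p^2 * (0:ℝ) + (1 - 2*p) * (-0 + 0) = 0 by ring,
        Real.zero_rpow (by norm_num : ((1:ℝ)/2) ≠ 0)]
      simp
    · have hx2 : 0 < (2*p^2 - 2*p + 1)*t + (-(1-2*p))*x := by nlinarith [hx.2]
      have e1 : 2 * p^2 * t + (1 - 2*p) * (t + -x) = (2*p^2 - 2*p + 1)*t + (-(1-2*p))*x := by ring
      have e2 : 2 * p^2 * x + (1 - 2*p) * (-x + x) = 2*p^2*x := by ring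
      rw [e1, e2, ← Real.sqrt_eq_rpow, ← Real.sqrt_eq_rpow,
        Real.sqrt_mul (by positivity : (0:ℝ) ≤ 2*p^2),
        Real.sqrt_mul (by norm_num : (0:ℝ) ≤ 2), Real.sqrt_sq hp0.le]
      have hsx : 0 < Real.sqrt x := Real.sqrt_pos.2 h0
      have hs2 : 0 < Real.sqrt 2 := by positivity
      have hpi := Real.pi_pos
      rw [show (1-p)/Real.pi * (Real.sqrt (t-x)/(Real.sqrt x*((2*p^2 - 2*p + 1)*t + (-(1-2*p))*x)))
          = ((1-p)*Real.sqrt (t-x))/(Real.pi*(Real.sqrt x*((2*p^2 - 2*p + 1)*t + (-(1-2*p))*x)))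
        from by rw [div_mul_div_comm]]
      rw [div_eq_div_iff (by positivity) (by positivity)]
      field_simp
  have hbase1 := (key_integrable ((2*p^2 - 2*p + 1)*t) (1-2*p) t ha ht hk1).const_mul (p/Real.pi)
  have hfi1 : IntervalIntegrable f volume 0 t := by
    apply hbase1.congr
    rw [uIoc_of_le ht.le]
    intro x hx
    exact (P1 x ⟨hx.1.le, hx.2⟩).symm
  have hbase2 := (key_integrable ((2*p^2 - 2*p + 1)*t) (-(1-2*p)) t ha ht hk2).const_mul
    ((1-p)/Real.pi)
  have hcomp : IntervalIntegrable (fun x => f (-x)) volume 0 t := by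
    apply hbase2.congr
    rw [uIoc_of_le ht.le]
    intro x hx
    exact (P2 x ⟨hx.1.le, hx.2⟩).symm
  have hfi2 : IntervalIntegrable f volume (-t) 0 := by
    have h := IntervalIntegrable.iff_comp_neg (f := f) (a := -t) (b := 0)
    rw [neg_neg, neg_zero] at h
    exact h.mpr hcomp.symm
  rw [← intervalIntegral.integral_add_adjacent_intervals hfi2 hfi1]
  have hneg : ∫ x in (-t)..(0:ℝ), f x =
      (1-p)/Real.pi * (Real.pi * t / (Real.sqrt ((2*p^2 - 2*p + 1)*t) *
        (Real.sqrt ((2*p^2 - 2*p + 1)*t) + Real.sqrt ((2*p^2 - 2*p + 1)*t + (-(1-2*p))*t)))) := by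
    have h1 : ∫ x in (0:ℝ)..t, f (-x) = ∫ x in (-t)..(0:ℝ), f x := by
      rw [intervalIntegral.integral_comp_neg f, neg_zero]
    rw [← h1]
    have h2 : ∫ x in (0:ℝ)..t, f (-x) = ∫ x in (0:ℝ)..t, (1-p)/Real.pi *
        (Real.sqrt (t-x) / (Real.sqrt x * ((2*p^2 - 2*p + 1)*t + (-(1-2*p))*x))) := by
      apply intervalIntegral.integral_congr
      rw [uIcc_of_le ht.le]
      intro x hx
      exact P2 x hx
    rw [h2, intervalIntegral.integral_const_mul, key_lemma _ _ _ ha ht hk2]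
  have hpos : ∫ x in (0:ℝ)..t, f x =
      p/Real.pi * (Real.pi * t / (Real.sqrt ((2*p^2 - 2*p + 1)*t) *
        (Real.sqrt ((2*p^2 - 2*p + 1)*t) + Real.sqrt ((2*p^2 - 2*p + 1)*t + (1-2*p)*t)))) := by
    have h2 : ∫ x in (0:ℝ)..t, f x = ∫ x in (0:ℝ)..t, p/Real.pi *
        (Real.sqrt (t-x) / (Real.sqrt x * ((2*p^2 - 2*p + 1)*t + (1-2*p)*x))) := by
      apply intervalIntegral.integral_congr
      rw [uIcc_of_le ht.le]
      intro x hx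
      exact P1 x hx
    rw [h2, intervalIntegral.integral_const_mul, key_lemma _ _ _ ha ht hk1]
  rw [hneg, hpos]
  have s1 : Real.sqrt ((2*p^2 - 2*p + 1)*t) = Real.sqrt (2*p^2 - 2*p + 1) * Real.sqrt t :=
    Real.sqrt_mul hc.le t
  have s2 : Real.sqrt ((2*p^2 - 2*p + 1)*t + (1-2*p)*t) = Real.sqrt 2 * (1-p) * Real.sqrt t := by
    rw [show (2*p^2 - 2*p + 1)*t + (1-2*p)*t = 2*(1-p)^2*t by ring,
      Real.sqrt_mul (by positivity : (0:ℝ) ≤ 2*(1-p)^2),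
      Real.sqrt_mul (by norm_num : (0:ℝ) ≤ 2), Real.sqrt_sq h1p.le]
  have s3 : Real.sqrt ((2*p^2 - 2*p + 1)*t + (-(1-2*p))*t) = Real.sqrt 2 * p * Real.sqrt t := by
    rw [show (2*p^2 - 2*p + 1)*t + (-(1-2*p))*t = 2*p^2*t by ring,
      Real.sqrt_mul (by positivity : (0:ℝ) ≤ 2*p^2),
      Real.sqrt_mul (by norm_num : (0:ℝ) ≤ 2), Real.sqrt_sq hp0.le]
  rw [s1, s2, s3]
  have hsc : 0 < Real.sqrt (2*p^2 - 2*p + 1) := Real.sqrt_pos.2 hc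
  have hst : 0 < Real.sqrt t := Real.sqrt_pos.2 ht
  have hs2 : 0 < Real.sqrt 2 := by positivity
  have hsc2 : Real.sqrt (2*p^2 - 2*p + 1) ^ 2 = 2*p^2 - 2*p + 1 := Real.sq_sqrt hc.le
  have hst2 : Real.sqrt t ^ 2 = t := Real.sq_sqrt ht.le
  have hs22 : Real.sqrt 2 ^ 2 = 2 := Real.sq_sqrt (by norm_num)
  have hpi := Real.pi_pos
  have hd1 : 0 < Real.sqrt (2*p^2 - 2*p + 1) + Real.sqrt 2 * (1-p) := by positivity
  have hd2 : 0 < Real.sqrt (2*p^2 - 2*p + 1) + Real.sqrt 2 * p := by positivity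
  field_simp
  have hc'' : Real.sqrt (p * 2 * (p - 1) + 1) = Real.sqrt (2*p^2 - 2*p + 1) := by congr 1; ring
  rw [hc'', div_eq_iff hsc.ne']
  linear_combination (-(Real.sqrt (2*p^2 - 2*p + 1)^2 + Real.sqrt (2*p^2 - 2*p + 1)*Real.sqrt 2 + p*(1-p)*Real.sqrt 2^2)*Real.sqrt (2*p^2 - 2*p + 1)) * hst2 + (-t*p*(1-p)*Real.sqrt (2*p^2 - 2*p + 1)) * hs22 + (-t*Real.sqrt (2*p^2 - 2*p + 1) - t*Real.sqrt 2) * hsc2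
end

section
/- Let p ∈ (0,1) and let x, s be real with |x| < s. Then (1/(2 p² (1−p)²)) ∫₀^∞ u^{−4} · r_{1/2}( (s+x) / (2p² u²) ) · r_{1/2}( (s−x) / (2(1−p)² u²) ) du = ( p(1−p)/√(2π) ) · ( p²(s−x) + (1−p)²(s+x) )^{−3/2}. The left-hand side is the 0-potential density u(x,s) = ∫₀^∞ w_u(x,s) du of the coupled process (L_{1/2}(t), S_{1/2}(t)), where w_u(x,s) = (1/(2p²(1−p)²)) q_u((s+x)/(2p²)) q_u((s−x)/(2(1−p)²)) and q_u(v) = u^{−2} r_{1/2}(v/u²) is the density of the 1/2-stable subordinator at time u. -/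
open MeasureTheory Set

lemma levy_key (a b : ℝ) (ha : 0 < a) (hb : 0 < b) :
    ∫ u in Ioi (0:ℝ), u ^ (-(4:ℝ)) * levyHalf (a / u^2) * levyHalf (b / u^2)
      = (1 / (2 * Real.sqrt Real.pi)) * (a + b) ^ (-(3:ℝ)/2) := by
  have hc : (0:ℝ) < 1/(4*a) + 1/(4*b) := by positivity
  have hπ : (0:ℝ) < Real.pi := Real.pi_pos
  have step1 : ∫ u in Ioi (0:ℝ), u ^ (-(4:ℝ)) * levyHalf (a / u^2) * levyHalf (b / u^2)
      = ∫ u in Ioi (0:ℝ), (1/(4*Real.pi) * a ^ (-(3:ℝ)/2) * b ^ (-(3:ℝ)/2)) *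
          (u ^ (2:ℝ) * Real.exp (-(1/(4*a) + 1/(4*b)) * u ^ (2:ℝ))) := by
    refine setIntegral_congr_fun measurableSet_Ioi (fun u hu => ?_)
    have hu : (0:ℝ) < u := hu
    have hu2 : (0:ℝ) < u^2 := by positivity
    unfold levyHalf
    rw [if_pos (div_pos ha hu2), if_pos (div_pos hb hu2)]
    have h2 : (u^2 : ℝ) = u ^ (2:ℝ) := by
      rw [← Real.rpow_natCast u 2]; norm_num
    have h3 : (u^2 : ℝ) ^ (-(3:ℝ)/2) = (u ^ (3:ℝ))⁻¹ := by
      rw [← Real.rpow_natCast u 2, ← Real.rpow_mul hu.le, ← Real.rpow_neg hu.le]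
      norm_num
    have hda : (a/u^2) ^ (-(3:ℝ)/2) = a ^ (-(3:ℝ)/2) * u ^ (3:ℝ) := by
      rw [Real.div_rpow ha.le hu2.le, h3, div_inv_eq_mul]
    have hdb : (b/u^2) ^ (-(3:ℝ)/2) = b ^ (-(3:ℝ)/2) * u ^ (3:ℝ) := by
      rw [Real.div_rpow hb.le hu2.le, h3, div_inv_eq_mul]
    have hea : -1 / (4 * (a/u^2)) = -(1/(4*a)) * u^2 := by field_simp
    have heb : -1 / (4 * (b/u^2)) = -(1/(4*b)) * u^2 := by field_simp
    rw [hda, hdb, hea, heb]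
    have hexp : Real.exp (-(1/(4*a)) * u^2) * Real.exp (-(1/(4*b)) * u^2)
        = Real.exp (-(1/(4*a) + 1/(4*b)) * u ^ (2:ℝ)) := by
      rw [← Real.exp_add, ← h2]; ring_nf
    have hpow : u ^ (-(4:ℝ)) * u ^ (3:ℝ) * u ^ (3:ℝ) = u ^ (2:ℝ) := by
      rw [← Real.rpow_add hu, ← Real.rpow_add hu]; norm_num
    have hsq : Real.sqrt Real.pi * Real.sqrt Real.pi = Real.pi := Real.mul_self_sqrt hπ.le
    calc u ^ (-(4:ℝ)) * (1 / (2 * Real.sqrt Real.pi) * (a ^ (-(3:ℝ)/2) * u ^ (3:ℝ)) *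
            Real.exp (-(1/(4*a)) * u^2)) *
          (1 / (2 * Real.sqrt Real.pi) * (b ^ (-(3:ℝ)/2) * u ^ (3:ℝ)) *
            Real.exp (-(1/(4*b)) * u^2))
        = (1/(2*Real.sqrt Real.pi) * (1/(2*Real.sqrt Real.pi)) * a ^ (-(3:ℝ)/2) * b ^ (-(3:ℝ)/2))
            * ((u ^ (-(4:ℝ)) * u ^ (3:ℝ) * u ^ (3:ℝ)) *
              (Real.exp (-(1/(4*a)) * u^2) * Real.exp (-(1/(4*b)) * u^2))) := by ring
      _ = _ := by
          rw [hpow, hexp]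
          have h4 : 2 * Real.sqrt Real.pi * (2 * Real.sqrt Real.pi) = 4 * Real.pi := by
            nlinarith [hsq]
          field_simp
          nlinarith [hsq]
  rw [step1, integral_const_mul,
    integral_rpow_mul_exp_neg_mul_rpow (by norm_num : (0:ℝ) < 2) (by norm_num : (-1:ℝ) < 2) hc]
  have hΓ : Real.Gamma (((2:ℝ)+1)/2) = Real.sqrt Real.pi / 2 := by
    rw [show ((2:ℝ)+1)/2 = 1/2 + 1 by norm_num, Real.Gamma_add_one (by norm_num),
      Real.Gamma_one_half_eq]
    ring
  have hE : (-((2:ℝ)+1)/2) = -(3:ℝ)/2 := by norm_num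
  rw [hΓ, hE]
  have h4 : (4:ℝ) ^ (-(3:ℝ)/2) = 1/8 := by
    rw [show (4:ℝ) = 2^(2:ℕ) by norm_num, ← Real.rpow_natCast 2 2,
      ← Real.rpow_mul (by norm_num : (0:ℝ) ≤ 2),
      show ((2:ℕ):ℝ) * (-(3:ℝ)/2) = ((-3:ℤ):ℝ) by norm_num, Real.rpow_intCast]
    norm_num
  have hab : (a+b) ^ (-(3:ℝ)/2) = (1/(4*a)+1/(4*b)) ^ (-(3:ℝ)/2) *
      ((4:ℝ)^(-(3:ℝ)/2) * (a ^ (-(3:ℝ)/2) * b ^ (-(3:ℝ)/2))) := by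
    rw [show a+b = (1/(4*a)+1/(4*b)) * (4*(a*b)) by field_simp; ring,
      Real.mul_rpow hc.le (by positivity), Real.mul_rpow (by norm_num) (by positivity),
      Real.mul_rpow ha.le hb.le]
  rw [hab, h4]
  have hsq : Real.sqrt Real.pi * Real.sqrt Real.pi = Real.pi :=
    Real.mul_self_sqrt hπ.le
  have hq0 : Real.sqrt Real.pi ≠ 0 := by positivity
  set q := Real.sqrt Real.pi with hq
  rw [← hsq]
  field_simp
  ring

/-- The 0-potential density of the coupled process `(L_{1/2}(t), S_{1/2}(t))`:
for `p ∈ (0,1)` and `|x| < s`,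
`(1/(2p²(1−p)²)) ∫₀^∞ u^{−4} r_{1/2}((s+x)/(2p²u²)) r_{1/2}((s−x)/(2(1−p)²u²)) du
 = (p(1−p)/√(2π)) (p²(s−x) + (1−p)²(s+x))^{−3/2}`. -/
theorem potential_density_half (p x s : ℝ) (hp : p ∈ Ioo (0:ℝ) 1) (hxs : |x| < s) :
    (1 / (2 * p^2 * (1 - p)^2)) *
      ∫ u in Ioi (0:ℝ),
        u ^ (-(4:ℝ)) * levyHalf ((s + x) / (2 * p^2 * u^2)) *
          levyHalf ((s - x) / (2 * (1 - p)^2 * u^2))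
      = (p * (1 - p) / Real.sqrt (2 * Real.pi)) *
          (p^2 * (s - x) + (1 - p)^2 * (s + x)) ^ (-(3:ℝ)/2) := by
  obtain ⟨hp0, hp1⟩ := hp
  have hq0 : (0:ℝ) < 1 - p := by linarith
  have hx1 : (0:ℝ) < s + x := by cases abs_lt.mp hxs; linarith
  have hx2 : (0:ℝ) < s - x := by cases abs_lt.mp hxs; linarith
  set a := (s + x) / (2 * p^2) with ha_def
  set b := (s - x) / (2 * (1 - p)^2) with hb_def
  have ha : 0 < a := by positivity
  have hb : 0 < b := by positivity
  have hint : (∫ u in Ioi (0:ℝ),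
        u ^ (-(4:ℝ)) * levyHalf ((s + x) / (2 * p^2 * u^2)) *
          levyHalf ((s - x) / (2 * (1 - p)^2 * u^2)))
      = ∫ u in Ioi (0:ℝ), u ^ (-(4:ℝ)) * levyHalf (a / u^2) * levyHalf (b / u^2) := by
    refine integral_congr_ae (Filter.Eventually.of_forall fun u => ?_)
    simp only [ha_def, hb_def, div_div]
  rw [hint, levy_key a b ha hb]
  set m := 2 * p^2 * (1 - p)^2 with hm_def
  have hm : (0:ℝ) < m := by positivity
  set D := p^2 * (s - x) + (1 - p)^2 * (s + x) with hD_def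
  have hD : (0:ℝ) < D := by positivity
  have hab : a + b = D / m := by
    rw [eq_div_iff hm.ne', ha_def, hb_def, hm_def, hD_def,
      div_add_div _ _ (mul_pos two_pos (pow_pos hp0 2)).ne' (mul_pos two_pos (pow_pos hq0 2)).ne',
      div_mul_eq_mul_div, div_eq_iff (mul_ne_zero (mul_pos two_pos (pow_pos hp0 2)).ne'
        (mul_pos two_pos (pow_pos hq0 2)).ne')]
    ring
  have hsm : Real.sqrt m = Real.sqrt 2 * (p * (1 - p)) := by
    rw [show m = 2 * (p * (1 - p))^2 by rw [hm_def]; ring,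
      Real.sqrt_mul (by norm_num), Real.sqrt_sq (by positivity)]
  have hm32 : m ^ (-(3:ℝ)/2) = (m * Real.sqrt m)⁻¹ := by
    have hms : m * Real.sqrt m = m ^ ((3:ℝ)/2) := by
      rw [Real.sqrt_eq_rpow, show (3:ℝ)/2 = 1 + 1/2 by norm_num, Real.rpow_add hm, Real.rpow_one]
    rw [hms, ← Real.rpow_neg hm.le]
    norm_num
  rw [hab, Real.div_rpow hD.le hm.le, hm32, Real.sqrt_mul (by norm_num : (0:ℝ) ≤ 2), hsm]
  have h2 : Real.sqrt 2 * Real.sqrt 2 = 2 := Real.mul_self_sqrt (by norm_num)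
  have hsπ : (0:ℝ) < Real.sqrt Real.pi := Real.sqrt_pos.mpr Real.pi_pos
  have hs2 : (0:ℝ) < Real.sqrt 2 := by norm_num
  generalize D ^ (-(3:ℝ)/2) = G
  generalize hMM : m = M at hm
  field_simp
  linear_combination G * h2
end
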